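/- Let G' be obtained from a partial cube G with no Q_{d+1} pc-minor by an isometric expansion with respect to an isometric cover (G¹, G⁰, G²). Then G' has no Q_{d+1} pc-minor if and only if the VC-dimension of G⁰ is at most d − 1. -/

import Mathlib

open Finset
open scoped Classical

variable {U : Type*}

/-- Hamming distance between two vertices of the hypercube `U → Bool`. -/
def hDist [Fintype U] [DecidableEq U] (x y : U → Bool) : ℕ :=
  (Finset.univ.filter fun i => x i ≠ y i).card

/-- The hypercube graph on `U → Bool`: two vertices are adjacent iff they differ
in exactly one coordinate. -/
def cubeGraph (U : Type*) [Fintype U] [DecidableEq U] : SimpleGraph (U → Bool) where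
  Adj x y := hDist x y = 1
  symm := by
    constructor
    intro x y h
    have hs : (Finset.univ.filter fun i => y i ≠ x i) =
        (Finset.univ.filter fun i => x i ≠ y i) := by
      apply Finset.filter_congr
      intro i _
      exact ne_comm
    simpa [hDist, hs] using h
  loopless := by
    constructor
    intro x h
    simp [hDist] at h

/-- Distance between `x` and `y` inside the subgraph of the hypercube induced by `A`
(`0` if one of them is not in `A`). -/
noncomputable def dIn [Fintype U] [DecidableEq U] (A : Set (U → Bool)) (x y : U → Bool) : ℕ :=
  if h : x ∈ A ∧ y ∈ A then ((cubeGraph U).induce A).dist ⟨x, h.1⟩ ⟨y, h.2⟩ else 0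

/-- A set of vertices of the hypercube is a partial cube if its induced graph is connected
and the induced graph distance coincides with the Hamming distance
(i.e. it is an isometric subgraph of the hypercube). -/
def IsPartialCube [Fintype U] [DecidableEq U] (A : Set (U → Bool)) : Prop :=
  ((cubeGraph U).induce A).Connected ∧ ∀ x ∈ A, ∀ y ∈ A, dIn A x y = hDist x y

/-- `A` shatters the coordinate set `X`. -/
def Shatters [Fintype U] [DecidableEq U] (A : Set (U → Bool)) (X : Finset U) : Prop :=
  ∀ g : U → Bool, ∃ a ∈ A, ∀ i ∈ X, a i = g i

/-- `A` strongly shatters `X`: it contains a full subcube over the coordinates `X`. -/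
def StronglyShatters [Fintype U] [DecidableEq U] (A : Set (U → Bool)) (X : Finset U) : Prop :=
  ∃ a : U → Bool, ∀ g : U → Bool, (fun i => if i ∈ X then g i else a i) ∈ A

/-- An ample set family: every shattered set is strongly shattered. -/
def IsAmple [Fintype U] [DecidableEq U] (A : Set (U → Bool)) : Prop :=
  ∀ X : Finset U, Shatters A X → StronglyShatters A X

/-- The pc-minor relation: `PCMinor S T` holds if `T` is obtained from `S` by a sequence of
restrictions to halfspaces and contractions of Θ-classes (a coordinate is contracted by
setting it to `false`). -/
inductive PCMinor {U : Type*} [DecidableEq U] : Set (U → Bool) → Set (U → Bool) → Prop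
  | refl (S : Set (U → Bool)) : PCMinor S S
  | restrict (S : Set (U → Bool)) (i : U) (b : Bool) (T : Set (U → Bool)) :
      PCMinor (S ∩ {f | f i = b}) T → PCMinor S T
  | contract (S : Set (U → Bool)) (i : U) (T : Set (U → Bool)) :
      PCMinor ((fun f => Function.update f i false) '' S) T → PCMinor S T

/-- `T` is a full subcube of dimension `k`. -/
def IsSubcube {U : Type*} [DecidableEq U] (T : Set (U → Bool)) (k : ℕ) : Prop :=
  ∃ (X : Finset U) (b : U → Bool), X.card = k ∧ T = {f | ∀ i ∉ X, f i = b i}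

/-- Extend a vertex of the cube on `U` to a vertex of the cube on `Option U`, using `b` as
the value of the new coordinate `none`. -/
def ext0 (f : U → Bool) (b : Bool) : Option U → Bool := fun o => o.elim b f

/-- An isometric cover `(S1, S0, S2)` of the partial cube `S`. -/
def IsIsoCover [Fintype U] [DecidableEq U] (S S1 S0 S2 : Set (U → Bool)) : Prop :=
  S1 ⊆ S ∧ S2 ⊆ S ∧ S1 ∪ S2 = S ∧ S0 = S1 ∩ S2 ∧ S0.Nonempty ∧
  IsPartialCube S1 ∧ IsPartialCube S2 ∧
  ∀ x ∈ S, ∀ y ∈ S, hDist x y = 1 → (x ∈ S1 ∧ y ∈ S1) ∨ (x ∈ S2 ∧ y ∈ S2)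

set_option linter.unusedSectionVars false

-- basic lemmas
lemma hDist_comm [Fintype U] [DecidableEq U] (x y : U → Bool) : hDist x y = hDist y x := by
  unfold hDist
  congr 1
  apply Finset.filter_congr
  intro i _
  exact ne_comm

lemma hDist_triangle [Fintype U] [DecidableEq U] (x y z : U → Bool) :
    hDist x z ≤ hDist x y + hDist y z := by
  unfold hDist
  calc (Finset.univ.filter fun i => x i ≠ z i).card
      ≤ ((Finset.univ.filter fun i => x i ≠ y i) ∪ (Finset.univ.filter fun i => y i ≠ z i)).card := by
        apply Finset.card_le_card
        intro i hi
        simp only [Finset.mem_filter, Finset.mem_union, Finset.mem_univ, true_and] at *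
        by_contra h
        push_neg at h
        exact hi (h.1 ▸ h.2)
    _ ≤ _ := Finset.card_union_le _ _

lemma hDist_self [Fintype U] [DecidableEq U] (x : U → Bool) : hDist x x = 0 := by
  simp [hDist]

lemma hDist_one [Fintype U] [DecidableEq U] {x y : U → Bool} (h : hDist x y = 1) :
    ∃ j, x j ≠ y j ∧ ∀ k ≠ j, x k = y k := by
  obtain ⟨j, hj⟩ := Finset.card_eq_one.mp h
  refine ⟨j, ?_, ?_⟩
  · have : j ∈ (Finset.univ.filter fun i => x i ≠ y i) := hj ▸ Finset.mem_singleton_self j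
    simpa using this
  · intro k hk
    by_contra hne
    have : k ∈ (Finset.univ.filter fun i => x i ≠ y i) := by simpa using hne
    rw [hj, Finset.mem_singleton] at this
    exact hk this

/-- flipping a coordinate where u and v agree increases hDist by 1 -/
lemma hDist_flip [Fintype U] [DecidableEq U] {u w v : U → Bool} {j : U}
    (hj : u j ≠ w j) (hk : ∀ k ≠ j, u k = w k) (hjv : u j = v j) :
    hDist w v = hDist u v + 1 := by
  unfold hDist
  have hset : (Finset.univ.filter fun i => w i ≠ v i)
      = insert j (Finset.univ.filter fun i => u i ≠ v i) := by
    ext k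
    simp only [Finset.mem_filter, Finset.mem_insert, Finset.mem_univ, true_and]
    by_cases hkj : k = j
    · subst hkj
      simp only [true_or, iff_true]
      rw [← hjv]
      exact fun h => hj h.symm
    · rw [hk k hkj]
      simp [hkj]
  rw [hset, Finset.card_insert_of_notMem (by simp [hjv])]

/-- Any walk in the induced cube graph has length at least the Hamming distance. -/
lemma hDist_le_walk_length [Fintype U] [DecidableEq U] {A : Set (U → Bool)}
    {u v : A} (p : ((cubeGraph U).induce A).Walk u v) : hDist u.1 v.1 ≤ p.length := by
  induction p with
  | nil => simp [hDist_self]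
  | @cons a b c h p ih =>
    have hab : hDist a.1 b.1 = 1 := h
    calc hDist a.1 c.1 ≤ hDist a.1 b.1 + hDist b.1 c.1 := hDist_triangle _ _ _
      _ ≤ 1 + p.length := by omega
      _ = p.length + 1 := by omega

/-- Key zig-zag lemma: along a geodesic from `S1` to `S2` all whose endpoints match `g`
on `X`, there is a vertex of `S0 = S1 ∩ S2` matching `g` on `X`. -/
lemma exists_S0_of_walk [Fintype U] [DecidableEq U] {S S1 S2 : Set (U → Bool)}
    (_hS12 : S1 ∪ S2 = S)
    (hedge : ∀ x ∈ S, ∀ y ∈ S, hDist x y = 1 → (x ∈ S1 ∧ y ∈ S1) ∨ (x ∈ S2 ∧ y ∈ S2))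
    (g : U → Bool) (X : Finset U) :
    ∀ {u v : S} (p : ((cubeGraph U).induce S).Walk u v),
      p.length = hDist u.1 v.1 → (∀ i ∈ X, u.1 i = g i) → (∀ i ∈ X, v.1 i = g i) →
      u.1 ∈ S1 → v.1 ∈ S2 →
      ∃ f0, (f0 ∈ S1 ∧ f0 ∈ S2) ∧ ∀ i ∈ X, f0 i = g i := by
  intro u v p
  induction p with
  | nil =>
    intro _ hu _ hu1 hv2
    exact ⟨_, ⟨hu1, hv2⟩, hu⟩
  | @cons a b c h p ih =>
    intro hlen ha hc ha1 hc2
    have hab : hDist a.1 b.1 = 1 := h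
    have hlen' : p.length + 1 = hDist a.1 c.1 := hlen
    have hge : hDist b.1 c.1 ≤ p.length := hDist_le_walk_length p
    have htr : hDist a.1 c.1 ≤ 1 + hDist b.1 c.1 := by
      calc hDist a.1 c.1 ≤ hDist a.1 b.1 + hDist b.1 c.1 := hDist_triangle _ _ _
        _ = 1 + hDist b.1 c.1 := by omega
    have hbc : hDist b.1 c.1 = p.length := by omega
    -- b matches g on X
    obtain ⟨j, hj, hk⟩ := hDist_one hab
    have hb : ∀ i ∈ X, b.1 i = g i := by
      intro i hi
      by_cases hij : i = j
      · subst hij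
        by_contra hne
        have huv : a.1 i = c.1 i := by rw [ha i hi, hc i hi]
        have : hDist b.1 c.1 = hDist a.1 c.1 + 1 := hDist_flip hj hk huv
        omega
      · rw [← hk i hij]
        exact ha i hi
    rcases hedge a.1 a.2 b.1 b.2 hab with ⟨_, hb1⟩ | ⟨ha2, _⟩
    · exact ih hbc.symm hb hc hb1 hc2
    · exact ⟨a.1, ⟨ha1, ha2⟩, ha⟩

/-- If both halves of an isometric cover contain a vertex matching `g` on `X`,
then so does `S0`. -/
lemma exists_S0_match [Fintype U] [DecidableEq U] {S S1 S0 S2 : Set (U → Bool)}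
    (hpc : IsPartialCube S) (hcov : IsIsoCover S S1 S0 S2)
    {g : U → Bool} {X : Finset U} {f1 f2 : U → Bool}
    (hf1 : f1 ∈ S1) (hf2 : f2 ∈ S2)
    (hm1 : ∀ i ∈ X, f1 i = g i) (hm2 : ∀ i ∈ X, f2 i = g i) :
    ∃ f0 ∈ S0, ∀ i ∈ X, f0 i = g i := by
  obtain ⟨hsub1, hsub2, hS12, hS0, -, -, -, hedge⟩ := hcov
  have h1S : f1 ∈ S := hsub1 hf1
  have h2S : f2 ∈ S := hsub2 hf2
  obtain ⟨p, hp⟩ := hpc.1.exists_walk_length_eq_dist ⟨f1, h1S⟩ ⟨f2, h2S⟩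
  have hdd : ((cubeGraph U).induce S).dist ⟨f1, h1S⟩ ⟨f2, h2S⟩ = hDist f1 f2 := by
    have := hpc.2 f1 h1S f2 h2S
    rwa [dIn, dif_pos ⟨h1S, h2S⟩] at this
  obtain ⟨f0, ⟨h01, h02⟩, hm⟩ :=
    exists_S0_of_walk hS12 hedge g X p (by rw [hp, hdd]) hm1 hm2 hf1 hf2
  exact ⟨f0, hS0 ▸ ⟨h01, h02⟩, hm⟩

lemma shatters_mono [Fintype U] [DecidableEq U] {A B : Set (U → Bool)} {X : Finset U}
    (hAB : A ⊆ B) (h : Shatters A X) : Shatters B X := by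
  intro g
  obtain ⟨a, ha, hm⟩ := h g
  exact ⟨a, hAB ha, hm⟩

lemma shatters_anti [Fintype U] [DecidableEq U] {A : Set (U → Bool)} {X Y : Finset U}
    (hXY : Y ⊆ X) (h : Shatters A X) : Shatters A Y := by
  intro g
  obtain ⟨a, ha, hm⟩ := h g
  exact ⟨a, ha, fun i hi => hm i (hXY hi)⟩

lemma shatters_of_contract [Fintype U] [DecidableEq U] {A : Set (U → Bool)} {X : Finset U}
    {i : U} (h : Shatters ((fun f => Function.update f i false) '' A) X) : Shatters A X := by
  by_cases hiX : i ∈ X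
  · exfalso
    obtain ⟨a, ⟨s, _, rfl⟩, hm⟩ := h (Function.update (fun _ => false) i true)
    simpa using hm i hiX
  · intro g
    obtain ⟨a, ⟨s, hs, rfl⟩, hm⟩ := h g
    refine ⟨s, hs, fun j hj => ?_⟩
    have hji : j ≠ i := fun hh => hiX (hh ▸ hj)
    simpa [Function.update_of_ne hji] using hm j hj

lemma shatters_of_pcminor [Fintype U] [DecidableEq U] {A T : Set (U → Bool)} {X : Finset U}
    (h : PCMinor A T) (hT : Shatters T X) : Shatters A X := by
  induction h with
  | refl => exact hT
  | restrict S i b T _ ih => exact shatters_mono Set.inter_subset_left (ih hT)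
  | contract S i T _ ih => exact shatters_of_contract (ih hT)

lemma subcube_shatters [Fintype U] [DecidableEq U] {T : Set (U → Bool)} {k : ℕ}
    (h : IsSubcube T k) : ∃ X : Finset U, X.card = k ∧ Shatters T X := by
  obtain ⟨X, b, hX, rfl⟩ := h
  refine ⟨X, hX, fun g => ⟨fun i => if i ∈ X then g i else b i, ?_, ?_⟩⟩
  · intro i hi
    simp [hi]
  · intro i hi
    simp [hi]

/-- Set all coordinates in `F` to `false`. -/
def zeroOn [DecidableEq U] (F : Finset U) (f : U → Bool) : U → Bool :=
  fun i => if i ∈ F then false else f i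

lemma pcminor_zeroOn [DecidableEq U] (F : Finset U) :
    ∀ A : Set (U → Bool), PCMinor A (zeroOn F '' A) := by
  induction F using Finset.induction with
  | empty =>
    intro A
    have : zeroOn (∅ : Finset U) '' A = A := by
      have : zeroOn (∅ : Finset U) = id := by
        funext f i
        simp [zeroOn]
      simp [this]
    rw [this]
    exact PCMinor.refl A
  | @insert a F ha ih =>
    intro A
    apply PCMinor.contract A a
    have hcomp : zeroOn (insert a F) '' A
        = zeroOn F '' ((fun f => Function.update f a false) '' A) := by
      rw [Set.image_image]
      apply Set.image_congr
      intro f _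
      funext i
      by_cases hiF : i ∈ F <;> by_cases hia : i = a <;>
        simp [zeroOn, Function.update, hiF, hia]
    rw [hcomp]
    exact ih _

/-- A set shattering `X` has a full subcube of dimension `|X|` as a pc-minor. -/
lemma pcminor_subcube_of_shatters [Fintype U] [DecidableEq U] {A : Set (U → Bool)}
    {X : Finset U} (h : Shatters A X) :
    ∃ T : Set (U → Bool), PCMinor A T ∧ IsSubcube T X.card := by
  refine ⟨zeroOn Xᶜ '' A, pcminor_zeroOn Xᶜ A, X, (fun _ => false), rfl, ?_⟩
  ext f
  simp only [Set.mem_image, Set.mem_setOf_eq]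
  constructor
  · rintro ⟨s, _, rfl⟩ i hi
    simp [zeroOn, hi]
  · intro hf
    obtain ⟨a, ha, hm⟩ := h f
    refine ⟨a, ha, ?_⟩
    funext i
    by_cases hi : i ∈ X
    · simp [zeroOn, hi, hm i hi]
    · simp [zeroOn, hi, hf i hi]

/-- Let `S'` be obtained from a partial cube `S` with no `Q_{d+1}` pc-minor
by an isometric expansion with respect to an isometric cover `(S1, S0, S2)`.  Then `S'` has
no `Q_{d+1}` pc-minor if and only if the VC-dimension of `S0` is at most `d - 1`. -/
theorem stmt7 [Fintype U] [DecidableEq U] (S S1 S0 S2 : Set (U → Bool)) (d : ℕ)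
    (hpc : IsPartialCube S) (hcov : IsIsoCover S S1 S0 S2)
    (hmin : ¬ ∃ T : Set (U → Bool), PCMinor S T ∧ IsSubcube T (d + 1)) :
    (¬ ∃ T : Set (Option U → Bool),
        PCMinor ((fun f => ext0 f false) '' S1 ∪ (fun f => ext0 f true) '' S2) T ∧
        IsSubcube T (d + 1)) ↔
      ∀ X : Finset U, Shatters S0 X → (X.card : ℤ) ≤ (d : ℤ) - 1 := by

  have hS0eq : S0 = S1 ∩ S2 := hcov.2.2.2.1
  constructor
  · -- no minor in S' ⇒ VC(S0) ≤ d - 1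
    intro hno X hX
    by_contra hlt
    push_neg at hlt
    have hdX : d ≤ X.card := by omega
    obtain ⟨Y, hYX, hYcard⟩ := Finset.exists_subset_card_eq hdX
    have hY : Shatters S0 Y := shatters_anti hYX hX
    -- S' shatters insert none (Y.image some)
    have hsh : Shatters ((fun f => ext0 f false) '' S1 ∪ (fun f => ext0 f true) '' S2)
        (insert none (Y.image some)) := by
      intro g'
      obtain ⟨a, ha, hm⟩ := hY (fun i => g' (some i))
      have ha12 : a ∈ S1 ∧ a ∈ S2 := by rw [hS0eq] at ha; exact ha
      have hmatch : ∀ b : Bool, ∀ i ∈ insert none (Y.image some),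
          ext0 a b i = (Function.update g' none b) i := by
        intro b i hi
        rcases Finset.mem_insert.mp hi with rfl | hi
        · simp [ext0]
        · obtain ⟨j, hj, rfl⟩ := Finset.mem_image.mp hi
          have : (some j : Option U) ≠ none := by simp
          rw [Function.update_of_ne this]
          exact hm j hj
      cases hgn : g' none with
      | false =>
        refine ⟨ext0 a false, Set.mem_union_left _ ⟨a, ha12.1, rfl⟩, fun i hi => ?_⟩
        rw [hmatch false i hi]
        by_cases hin : i = none
        · subst hin; simp [hgn]
        · rw [Function.update_of_ne hin]
      | true =>
        refine ⟨ext0 a true, Set.mem_union_right _ ⟨a, ha12.2, rfl⟩, fun i hi => ?_⟩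
        rw [hmatch true i hi]
        by_cases hin : i = none
        · subst hin; simp [hgn]
        · rw [Function.update_of_ne hin]
    obtain ⟨T, hT, hTsub⟩ := pcminor_subcube_of_shatters hsh
    have hcard : (insert none (Y.image some)).card = d + 1 := by
      rw [Finset.card_insert_of_notMem (by simp),
        Finset.card_image_of_injective _ (Option.some_injective U), hYcard]
    exact hno ⟨T, hT, hcard ▸ hTsub⟩
  · -- VC(S0) ≤ d - 1 ⇒ no minor in S'
    rintro hvc ⟨T, hTmin, hTsub⟩
    obtain ⟨X', hX'card, hX'sh⟩ := subcube_shatters hTsub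
    have hshS' : Shatters ((fun f => ext0 f false) '' S1 ∪ (fun f => ext0 f true) '' S2) X' :=
      shatters_of_pcminor hTmin hX'sh
    set X : Finset U := X'.eraseNone with hXdef
    have hins : Finset.insertNone X = insert none X' := Finset.insertNone_eraseNone X'
    by_cases hnone : (none : Option U) ∈ X'
    · -- S0 shatters X of size d, contradiction with hvc
      have hXcard : X.card = d := by
        have h1 : (Finset.insertNone X).card = X.card + 1 := Finset.card_insertNone X
        rw [hins, Finset.insert_eq_self.mpr hnone, hX'card] at h1
        omega
      have hshS0 : Shatters S0 X := by
        intro g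
        obtain ⟨a1, ha1, hm1⟩ := hshS' (ext0 g false)
        obtain ⟨a2, ha2, hm2⟩ := hshS' (ext0 g true)
        have ha1n : a1 none = false := by
          have := hm1 none hnone
          simpa [ext0] using this
        have ha2n : a2 none = true := by
          have := hm2 none hnone
          simpa [ext0] using this
        rcases ha1 with ⟨f1, hf1, rfl⟩ | ⟨f1, hf1, rfl⟩
        swap
        · exact absurd ha1n (by simp [ext0])
        rcases ha2 with ⟨f2, hf2, rfl⟩ | ⟨f2, hf2, rfl⟩
        · exact absurd ha2n (by simp [ext0])
        have hm1' : ∀ i ∈ X, f1 i = g i := by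
          intro i hi
          have hsome : (some i : Option U) ∈ X' := Finset.mem_eraseNone.mp hi
          simpa [ext0] using hm1 (some i) hsome
        have hm2' : ∀ i ∈ X, f2 i = g i := by
          intro i hi
          have hsome : (some i : Option U) ∈ X' := Finset.mem_eraseNone.mp hi
          simpa [ext0] using hm2 (some i) hsome
        exact exists_S0_match hpc hcov hf1 hf2 hm1' hm2'
      have := hvc X hshS0
      rw [hXcard] at this
      omega
    · -- S shatters X of size d+1, contradiction with hmin
      have hXcard : X.card = d + 1 := by
        have h1 : (Finset.insertNone X).card = X.card + 1 := Finset.card_insertNone X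
        rw [hins, Finset.card_insert_of_notMem hnone, hX'card] at h1
        omega
      have hshS : Shatters S X := by
        intro g
        obtain ⟨a, ha, hm⟩ := hshS' (ext0 g false)
        have key : ∀ f : U → Bool, ∀ b : Bool, a = ext0 f b → f ∈ S →
            ∃ s ∈ S, ∀ i ∈ X, s i = g i := by
          rintro f b rfl hfS
          refine ⟨f, hfS, fun i hi => ?_⟩
          have hsome : (some i : Option U) ∈ X' := Finset.mem_eraseNone.mp hi
          simpa [ext0] using hm (some i) hsome
        rcases ha with ⟨f, hf, heq⟩ | ⟨f, hf, heq⟩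
        · exact key f false heq.symm (hcov.1 hf)
        · exact key f true heq.symm (hcov.2.1 hf)
      obtain ⟨T', hT', hT'sub⟩ := pcminor_subcube_of_shatters hshS
      exact hmin ⟨T', hT', hXcard ▸ hT'sub⟩
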